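/- Let k > 0 and q_R ∈ ℝ with k·q_R > 1. Define S(q) := q·[k·φ(q_R) + Φ(q_R) − Φ(q)] − φ(q) for q ∈ ℝ. Then S(q) > 0 for all q ≥ q_R. -/

import Mathlib

/-- The standard normal density φ(x) = exp(−x²/2)/√(2π). -/
noncomputable def normPdf (x : ℝ) : ℝ := Real.exp (-(x ^ 2) / 2) / Real.sqrt (2 * Real.pi)

/-- The standard normal CDF Φ(x) = ∫_{−∞}^{x} φ(t) dt. -/
noncomputable def normCdf (x : ℝ) : ℝ := ∫ t in Set.Iic x, normPdf t

open MeasureTheory intervalIntegral Set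

lemma normPdf_pos (x : ℝ) : 0 < normPdf x := by
  unfold normPdf
  positivity

lemma continuous_normPdf : Continuous normPdf := by
  unfold normPdf
  fun_prop

lemma integrable_normPdf : Integrable normPdf := by
  have h : Integrable (fun x : ℝ => Real.exp (-(1/2 : ℝ) * x ^ 2)) :=
    integrable_exp_neg_mul_sq (by norm_num)
  have : normPdf = fun x => Real.exp (-(1/2 : ℝ) * x ^ 2) * (Real.sqrt (2 * Real.pi))⁻¹ := by
    funext x; unfold normPdf; rw [div_eq_mul_inv]; ring_nf
  rw [this]
  exact h.mul_const _

lemma hasDerivAt_normPdf (x : ℝ) : HasDerivAt normPdf (-x * normPdf x) x := by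
  have h1 : HasDerivAt (fun t : ℝ => -(t ^ 2) / 2) (-x) x := by
    have := ((hasDerivAt_pow 2 x).neg).div_const 2
    simpa using this.congr_deriv (by push_cast; ring)
  have h2 : HasDerivAt (fun t : ℝ => Real.exp (-(t ^ 2) / 2)) (Real.exp (-(x ^ 2) / 2) * (-x)) x :=
    (Real.hasDerivAt_exp _).comp x h1
  have h3 := h2.div_const (Real.sqrt (2 * Real.pi))
  have : Real.exp (-(x ^ 2) / 2) * (-x) / Real.sqrt (2 * Real.pi) = -x * normPdf x := by
    unfold normPdf; ring
  rw [this] at h3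
  exact h3

lemma hasDerivAt_normCdf (x : ℝ) : HasDerivAt normCdf (normPdf x) x := by
  have key : normCdf = fun u => normCdf 0 + ∫ t in (0:ℝ)..u, normPdf t := by
    funext u
    have := integral_Iic_sub_Iic (integrable_normPdf.integrableOn (s := Iic (0:ℝ)))
      (integrable_normPdf.integrableOn (s := Iic u))
    unfold normCdf
    linarith [this]
  rw [key]
  have : HasDerivAt (fun u => ∫ t in (0:ℝ)..u, normPdf t) (normPdf x) x :=
    integral_hasDerivAt_right (integrable_normPdf.intervalIntegrable)
      (continuous_normPdf.aestronglyMeasurable.stronglyMeasurableAtFilter)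
      continuous_normPdf.continuousAt
  simpa using this.const_add (normCdf 0)

lemma integral_t_normPdf (a b : ℝ) :
    ∫ t in a..b, t * normPdf t = normPdf a - normPdf b := by
  have : ∀ x ∈ Set.uIcc a b, HasDerivAt (fun t => -normPdf t) (x * normPdf x) x := by
    intro x _
    have := (hasDerivAt_normPdf x).neg
    simp only [neg_mul, neg_neg] at this
    exact this
  have h := integral_eq_sub_of_hasDerivAt this
    ((continuous_id.mul continuous_normPdf).intervalIntegrable a b)
  linarith [h]

/-- Mills-type bound: for 0 < a ≤ b, ∫_a^b φ ≤ (φ(a) − φ(b))/a. -/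
lemma integral_normPdf_le (a b : ℝ) (ha : 0 < a) (hab : a ≤ b) :
    ∫ t in a..b, normPdf t ≤ (normPdf a - normPdf b) / a := by
  have hmono : ∫ t in a..b, normPdf t ≤ ∫ t in a..b, (t / a) * normPdf t := by
    apply integral_mono_on hab
    · exact continuous_normPdf.intervalIntegrable a b
    · exact ((continuous_id.div_const a).mul continuous_normPdf).intervalIntegrable a b
    · intro x hx
      have hx1 : 1 ≤ x / a := (one_le_div ha).mpr hx.1
      nlinarith [normPdf_pos x]
  have heq : ∫ t in a..b, (t / a) * normPdf t = (normPdf a - normPdf b) / a := by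
    have : ∀ t : ℝ, (t / a) * normPdf t = (1 / a) * (t * normPdf t) := by intro t; ring
    simp_rw [this]
    rw [intervalIntegral.integral_const_mul, integral_t_normPdf]
    ring
  linarith

/-- If k > 0 and k·q_R > 1, then
S(q) = q·[k·φ(q_R) + Φ(q_R) − Φ(q)] − φ(q) is strictly positive for all q ≥ q_R. -/
theorem S_pos (k qR : ℝ) (hk : 0 < k) (h : 1 < k * qR) :
    ∀ q : ℝ, qR ≤ q →
      q * (k * normPdf qR + normCdf qR - normCdf q) - normPdf q > 0 := by
  have hqR : 0 < qR := by
    rcases le_or_gt qR 0 with hq | hq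
    · nlinarith
    · exact hq
  intro q hq
  set A : ℝ := k * normPdf qR + normCdf qR with hA
  set S : ℝ → ℝ := fun x => x * (A - normCdf x) - normPdf x with hS
  -- derivative of S is A - normCdf x
  have hderiv : ∀ x : ℝ, HasDerivAt S (A - normCdf x) x := by
    intro x
    have h1 : HasDerivAt (fun y : ℝ => y * (A - normCdf y))
        (1 * (A - normCdf x) + x * (0 - normPdf x)) x :=
      (hasDerivAt_id x).mul ((hasDerivAt_const x A).sub (hasDerivAt_normCdf x))
    have h2 := h1.sub (hasDerivAt_normPdf x)
    have : 1 * (A - normCdf x) + x * (0 - normPdf x) - (-x * normPdf x) = A - normCdf x := by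
      ring
    rw [this] at h2
    exact h2
  -- derivative nonneg on interior of Ici qR
  have hmono : MonotoneOn S (Set.Ici qR) := by
    apply monotoneOn_of_deriv_nonneg (convex_Ici qR)
      (fun x _ => (hderiv x).differentiableAt.continuousAt.continuousWithinAt)
      (fun x hx => ((hderiv x).differentiableAt).differentiableWithinAt)
    intro x hx
    rw [interior_Ici] at hx
    rw [(hderiv x).deriv]
    have hcdf : normCdf x - normCdf qR = ∫ t in qR..x, normPdf t := by
      have := integral_Iic_sub_Iic (integrable_normPdf.integrableOn (s := Iic qR))
        (integrable_normPdf.integrableOn (s := Iic x))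
      unfold normCdf
      linarith
    have hb := integral_normPdf_le qR x hqR hx.le
    have hpb : 0 < normPdf x := normPdf_pos x
    have hpa : 0 < normPdf qR := normPdf_pos qR
    have : normCdf x - normCdf qR ≤ normPdf qR / qR := by
      rw [hcdf]
      calc ∫ t in qR..x, normPdf t ≤ (normPdf qR - normPdf x) / qR := hb
        _ ≤ normPdf qR / qR := by gcongr; linarith
    have hk' : normPdf qR / qR ≤ k * normPdf qR := by
      rw [div_le_iff₀ hqR]
      nlinarith
    simp only [hA] at *
    linarith
  have hbase : S qR = (k * qR - 1) * normPdf qR := by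
    simp only [hS, hA]; ring
  have h1 : S qR ≤ S q := hmono (Set.self_mem_Ici) hq hq
  have h2 : 0 < S qR := by
    rw [hbase]
    have := normPdf_pos qR
    nlinarith
  show 0 < S q
  linarith
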